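/- arXiv:2304.03639 — 4 statements merged into one kernel-verified Lean document; each statement's English description precedes it below -/
import Mathlib

section
/- If the linear recurrent network accepts the balanced bracket language (final state zero iff counts equal), then a ≠ 0, b ≠ 0, U ≠ 0, U ≠ -1, b = -U·a, U = 1, and a = -b. -/
/-- Hidden state of a single-cell linear RNN on a bracket sequence
(`true` = '(' contributing `a`, `false` = ')' contributing `b`),
processed left to right from initial state `0` via `h_t = c_t + U * h_{t-1}`. -/
def hState (a b U : ℝ) (s : List Bool) : ℝ :=
  s.foldl (fun h x => (if x then a else b) + U * h) 0

theorem stmt_2 (a b U : ℝ)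
    (hacc : ∀ s : List Bool, hState a b U s = 0 ↔ s.count true = s.count false) :
    a ≠ 0 ∧ b ≠ 0 ∧ U ≠ 0 ∧ U ≠ -1 ∧ b = -U * a ∧ U = 1 ∧ a = -b := by
  have ha : a ≠ 0 := by
    have h := hacc [true]
    simp [hState] at h
    exact h
  have hb : b ≠ 0 := by
    have h := hacc [false]
    simp [hState] at h
    exact h
  have h1 : b + U * (a + U * 0) = 0 := by
    have h := (hacc [true, false]).2
    simpa [hState] using h
  have h2 : a + U * (b + U * 0) = 0 := by
    have h := (hacc [false, true]).2
    simpa [hState] using h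
  have hU2 : U ^ 2 = 1 := by
    have key : a * (1 - U ^ 2) = 0 := by linear_combination h2 - U * h1
    rcases mul_eq_zero.1 key with h | h
    · exact absurd h ha
    · linarith
  have hUne : U ≠ -1 := by
    intro hU
    have h4 := (hacc [true, true, true, false]).1
    simp [hState, hU] at h4
    rw [hU] at h1
    apply h4
    linarith
  have hU1 : U = 1 := by
    have key : (U - 1) * (U + 1) = 0 := by linear_combination hU2
    rcases mul_eq_zero.1 key with h | h
    · linarith
    · exact absurd (by linarith) hUne
  refine ⟨ha, hb, ?_, hUne, by linarith [h1], hU1, by nlinarith [h1]⟩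
  intro h; rw [h] at hU2; norm_num at hU2
end

section
/- A linear recurrent network accepts the balanced bracket language if and only if U = 1 and a = -b and a ≠ 0. -/
lemma foldl_one (a : ℝ) (s : List Bool) : ∀ h : ℝ,
    s.foldl (fun h x => (if x then a else -a) + 1 * h) h
      = h + a * (s.count true) - a * (s.count false) := by
  induction s with
  | nil => intro h; simp
  | cons x t ih =>
    intro h
    rw [List.foldl_cons, ih]
    cases x <;> simp [List.count_cons] <;> push_cast <;> ring

theorem stmt_3 (a b U : ℝ) :
    (∀ s : List Bool, hState a b U s = 0 ↔ s.count true = s.count false) ↔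
      U = 1 ∧ a = -b ∧ a ≠ 0 := by
  constructor
  · intro H
    have ha : a ≠ 0 := by
      intro h0
      have := (H [true]).mp (by simp [hState, h0])
      simp at this
    have h1 : b + U * a = 0 := by
      have := (H [true, false]).mpr (by simp)
      simp [hState] at this; linarith
    have h2 : a + U * b = 0 := by
      have := (H [false, true]).mpr (by simp)
      simp [hState] at this; linarith
    have hU : U ≠ -1 := by
      intro hU
      subst hU
      have := (H [true, true]).mp (by norm_num [hState])
      simp at this
    have hb : b = -U * a := by linarith
    have : a * (U * U - 1) = 0 := by linear_combination U * h1 - h2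
    have hU2 : U * U = 1 := by
      rcases mul_eq_zero.mp this with h | h
      · exact absurd h ha
      · linarith
    have hU1 : U = 1 := by
      rcases mul_self_eq_one_iff.mp hU2 with h | h
      · exact h
      · exact absurd h hU
    refine ⟨hU1, by rw [hU1] at hb; linarith, ha⟩
  · rintro ⟨hU, hab, ha⟩
    subst hU
    have hb : b = -a := by linarith
    subst hb
    intro s
    have := foldl_one a s 0
    rw [hState, this]
    constructor
    · intro h
      have : (s.count true : ℝ) = s.count false := by
        have := mul_left_cancel₀ ha (by linarith : a * (s.count true : ℝ) = a * s.count false)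
        exact this
      exact_mod_cast this
    · intro h; rw [h]; ring
end

section
/- Suppose a ≠ 0, b ≠ 0, b = -U·a, U ≠ -1, and both b + U·b + U²·a + U³·a = 0 and b + U·a + U²·b + U³·a = 0. Then U = 1 and a = -b. -/
theorem stmt_7 (a b U : ℝ) (ha : a ≠ 0) (hb : b ≠ 0) (hba : b = -U * a) (hU : U ≠ -1)
    (h5 : b + U * b + U ^ 2 * a + U ^ 3 * a = 0)
    (h6 : b + U * a + U ^ 2 * b + U ^ 3 * a = 0) :
    U = 1 ∧ a = -b := by
  subst hba
  have hU0 : U ≠ 0 := by intro h; apply hb; rw [h]; ring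
  have key : U * a * ((U - 1) * (U + 1)) = 0 := by ring_nf; linarith [h5]
  have h1 : (U - 1) * (U + 1) = 0 := by
    rcases mul_eq_zero.mp key with h | h
    · exact absurd (mul_eq_zero.mp h) (by simp [hU0, ha])
    · exact h
  rcases mul_eq_zero.mp h1 with h | h
  · have hU1 : U = 1 := by linarith
    exact ⟨hU1, by rw [hU1]; ring⟩
  · exact absurd (by linarith : U = -1) hU
end

section
/- If U ≠ 1, then there exist two bracket sequences, both in BB, such that the final hidden states of the linear recurrent network on them differ, and hence they cannot both be zero unless a = b; consequently if additionally b = -U·a and a ≠ 0 and U ≠ -1, the network cannot accept BB. -/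
theorem stmt_12 (a b U : ℝ) (hU : U ≠ 1) :
    (a ≠ b → ∃ s t : List Bool,
        s.count true = s.count false ∧ t.count true = t.count false ∧
        hState a b U s ≠ hState a b U t) ∧
    (b = -U * a → a ≠ 0 → U ≠ -1 →
      ¬ (∀ s : List Bool, hState a b U s = 0 ↔ s.count true = s.count false)) := by
  have key : ∀ a b : ℝ, a ≠ b →
      hState a b U [true, false] ≠ hState a b U [false, true] := by
    intro a b hab
    simp only [hState, List.foldl, Bool.false_eq_true, if_true, if_false, mul_zero, zero_add]
    intro h
    apply hab
    have h1 : (b - a) * (1 - U) = 0 := by ring_nf; ring_nf at h; linarith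
    rcases mul_eq_zero.mp h1 with h2 | h2
    · linarith
    · exact absurd (by linarith : U = 1) hU
  constructor
  · intro hab
    exact ⟨[true, false], [false, true], rfl, rfl, key a b hab⟩
  · intro hb ha hU1 hall
    have hab : a ≠ b := by
      intro h
      apply ha
      have : a * (1 + U) = 0 := by rw [hb] at h; nlinarith
      rcases mul_eq_zero.mp this with h2 | h2
      · exact h2
      · exact absurd (by linarith : U = -1) hU1
    have h1 := (hall [true, false]).mpr rfl
    have h2 := (hall [false, true]).mpr rfl
    exact key a b hab (h1.trans h2.symm)
end
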